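/- Let P be a univariate probability measure symmetric about 0 with invertible CDF F, and let T be any centro-equivariant location functional (so T_P = 0). Then for Σ > 0, the scatter halfspace depth equals HD_P(Σ) = 2 min( F(√Σ) − 1/2, 1 − F(√Σ) ), and the depth region R(α) = {Σ > 0 : HD_P(Σ) ≥ α} equals the interval [ (F^{-1}(1/2 + α/2))², (F^{-1}(1 − α/2))² ]. -/

import Mathlib

open MeasureTheory Matrix

/-- Largest "eigenvalue" via the Rayleigh quotient (equals the largest eigenvalue
for symmetric matrices). -/
noncomputable def lamMax {k : ℕ} (A : Matrix (Fin k) (Fin k) ℝ) : ℝ :=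
  ⨆ u : {u : Fin k → ℝ // u ⬝ᵥ u = 1}, u.1 ⬝ᵥ A *ᵥ u.1

/-- Smallest "eigenvalue" via the Rayleigh quotient. -/
noncomputable def lamMin {k : ℕ} (A : Matrix (Fin k) (Fin k) ℝ) : ℝ :=
  ⨅ u : {u : Fin k → ℝ // u ⬝ᵥ u = 1}, u.1 ⬝ᵥ A *ᵥ u.1

/-- The scatter halfspace depth of a scatter matrix `Sg` w.r.t. the probability
measure `P`, with location `T`. -/
noncomputable def HD {k : ℕ} (P : Measure (Fin k → ℝ)) (T : Fin k → ℝ)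
    (Sg : Matrix (Fin k) (Fin k) ℝ) : ℝ :=
  ⨅ u : {u : Fin k → ℝ // u ⬝ᵥ u = 1},
    min (P {x | |u.1 ⬝ᵥ (x - T)| ≤ Real.sqrt (u.1 ⬝ᵥ Sg *ᵥ u.1)}).toReal
        (P {x | Real.sqrt (u.1 ⬝ᵥ Sg *ᵥ u.1) ≤ |u.1 ⬝ᵥ (x - T)|}).toReal

/-- Matrix square root via the continuous functional calculus. -/
noncomputable def msqrt {k : ℕ} (A : Matrix (Fin k) (Fin k) ℝ) : Matrix (Fin k) (Fin k) ℝ :=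
  cfc Real.sqrt A

/-- Matrix logarithm via the continuous functional calculus. -/
noncomputable def mlog {k : ℕ} (A : Matrix (Fin k) (Fin k) ℝ) : Matrix (Fin k) (Fin k) ℝ :=
  cfc Real.log A

/-- Matrix real power via the continuous functional calculus. -/
noncomputable def mpow {k : ℕ} (A : Matrix (Fin k) (Fin k) ℝ) (t : ℝ) :
    Matrix (Fin k) (Fin k) ℝ :=
  cfc (fun x : ℝ => x ^ t) A

/-- The geodesic path from `A` to `B` in the space of positive definite matrices. -/
noncomputable def geoPath {k : ℕ} (A B : Matrix (Fin k) (Fin k) ℝ) (t : ℝ) :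
    Matrix (Fin k) (Fin k) ℝ :=
  msqrt A * mpow ((msqrt A)⁻¹ * B * (msqrt A)⁻¹) t * msqrt A

/-- The harmonic path from `A` to `B`. -/
noncomputable def harmPath {k : ℕ} (A B : Matrix (Fin k) (Fin k) ℝ) (t : ℝ) :
    Matrix (Fin k) (Fin k) ℝ :=
  ((1 - t) • A⁻¹ + t • B⁻¹)⁻¹

/-- Frobenius norm of a matrix. -/
noncomputable def frob {k : ℕ} (A : Matrix (Fin k) (Fin k) ℝ) : ℝ :=
  Real.sqrt (∑ i, ∑ j, (A i j) ^ 2)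

/-- Geodesic distance on the space of positive definite matrices. -/
noncomputable def dg {k : ℕ} (A B : Matrix (Fin k) (Fin k) ℝ) : ℝ :=
  frob (mlog ((msqrt A)⁻¹ * B * (msqrt A)⁻¹))

/-- Sign vectors in `{-1,1}^k`. -/
def SignVec (k : ℕ) := {s : Fin k → ℝ // ∀ i, s i = 1 ∨ s i = -1}

/-- Univariate scatter halfspace depth (with location `0`). -/
noncomputable def HD1 (P : Measure ℝ) (c : ℝ) : ℝ :=
  min (P {x | |x| ≤ Real.sqrt c}).toReal (P {x | Real.sqrt c ≤ |x|}).toReal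

section auxHD
open MeasureTheory Set Filter ProbabilityTheory

private theorem HD_univ_aux (P : Measure ℝ) [IsProbabilityMeasure P]
    (hsym : P.map (fun x => -x) = P)
    (F : ℝ → ℝ) (hF : F = fun x => ProbabilityTheory.cdf P x)
    (hFc : Continuous F) (hFm : StrictMono F)
    (Finv : ℝ → ℝ) (hFinv : ∀ y ∈ Set.Ioo (0 : ℝ) 1, F (Finv y) = y) :
    (∀ c : ℝ, 0 < c →
        HD1 P c = 2 * min (F (Real.sqrt c) - 1 / 2) (1 - F (Real.sqrt c))) ∧
      (∀ α : ℝ, 0 < α → α < 1 →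
        {c : ℝ | 0 < c ∧ α ≤ HD1 P c} =
          Set.Icc ((Finv (1 / 2 + α / 2)) ^ 2) ((Finv (1 - α / 2)) ^ 2)) := by
  have hc : Continuous (⇑(cdf P)) := by rw [hF] at hFc; exact hFc
  have hleft : ∀ x : ℝ, Function.leftLim (⇑(cdf P)) x = F x := fun x =>
    (leftLim_eq_of_tendsto (h := (inferInstance : (nhdsWithin x (Iio x)).NeBot))
      ((hc.tendsto x).mono_left nhdsWithin_le_nhds)).trans (by rw [hF])
  have hPmeas : (cdf P).measure = P := measure_cdf P
  have hFe : ∀ x, (cdf P : ℝ → ℝ) x = F x := fun x => by rw [hF]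
  have hF0le : ∀ t, 0 ≤ F t := fun t => by simpa [hF] using cdf_nonneg P t
  have hFle1 : ∀ t, F t ≤ 1 := fun t => by simpa [hF] using cdf_le_one P t
  -- symmetry: F(-t) = 1 - F t
  have hFneg : ∀ t : ℝ, F (-t) = 1 - F t := by
    intro t
    have key : ENNReal.ofReal (F (-t)) = ENNReal.ofReal (1 - F t) := by
      calc ENNReal.ofReal (F (-t)) = P (Iic (-t)) := by rw [hF]; exact ofReal_cdf P (-t)
        _ = (P.map (fun x : ℝ => -x)) (Iic (-t)) := by rw [hsym]
        _ = P ((fun x : ℝ => -x) ⁻¹' (Iic (-t))) :=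
            Measure.map_apply measurable_neg measurableSet_Iic
        _ = P (Ici t) := by congr 1; ext x; simp
        _ = ENNReal.ofReal (1 - F t) := by
            conv_lhs => rw [← hPmeas]
            rw [StieltjesFunction.measure_Ici _ (tendsto_cdf_atTop P), hleft t]
    exact (ENNReal.ofReal_eq_ofReal_iff (hF0le _) (sub_nonneg.mpr (hFle1 t))).mp key
  have hF0 : F 0 = 1 / 2 := by have := hFneg 0; rw [neg_zero] at this; linarith
  -- main univariate computation
  have main : ∀ c : ℝ, 0 < c →
      HD1 P c = 2 * min (F (Real.sqrt c) - 1 / 2) (1 - F (Real.sqrt c)) := by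
    intro c hcpos
    set t := Real.sqrt c with ht
    have htpos : 0 < t := Real.sqrt_pos.mpr hcpos
    have hFt : 1 / 2 < F t := hF0 ▸ hFm htpos
    have hA : (P {x | |x| ≤ t}).toReal = 2 * F t - 1 := by
      have hset : {x : ℝ | |x| ≤ t} = Icc (-t) t := by ext x; simp [abs_le]
      rw [hset, ← hPmeas, StieltjesFunction.measure_Icc, hleft, hFe, hFneg,
        ENNReal.toReal_ofReal (by linarith)]
      ring
    have hB : (P {x | t ≤ |x|}).toReal = 2 * (1 - F t) := by
      have hset : {x : ℝ | t ≤ |x|} = (Ioo (-t) t)ᶜ := by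
        ext x
        simp only [Set.mem_setOf_eq, Set.mem_compl_iff, Set.mem_Ioo, ← abs_lt, not_lt]
      have hIoo : P (Ioo (-t) t) = ENNReal.ofReal (2 * F t - 1) := by
        rw [← hPmeas, StieltjesFunction.measure_Ioo, hleft, hFe, hFneg]
        congr 1; ring
      rw [hset, measure_compl measurableSet_Ioo (measure_ne_top _ _), measure_univ, hIoo,
        ← ENNReal.ofReal_one, ← ENNReal.ofReal_sub _ (by linarith),
        ENNReal.toReal_ofReal (by have := hFle1 t; linarith)]
      ring
    rw [HD1, ← ht, hA, hB]
    rw [show (2 : ℝ) * F t - 1 = 2 * (F t - 1 / 2) by ring]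
    exact (mul_min_of_nonneg _ _ (by norm_num : (0:ℝ) ≤ 2)).symm
  refine ⟨main, ?_⟩
  intro α hα0 hα1
  set a := Finv (1 / 2 + α / 2) with ha_def
  set b := Finv (1 - α / 2) with hb_def
  have hFa : F a = 1 / 2 + α / 2 := hFinv _ ⟨by linarith, by linarith⟩
  have hFb : F b = 1 - α / 2 := hFinv _ ⟨by linarith, by linarith⟩
  have ha : 0 < a := by
    have : F 0 < F a := by rw [hF0, hFa]; linarith
    exact hFm.lt_iff_lt.mp this
  have hb : 0 < b := by
    have : F 0 < F b := by rw [hF0, hFb]; linarith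
    exact hFm.lt_iff_lt.mp this
  ext c
  simp only [Set.mem_setOf_eq, Set.mem_Icc]
  constructor
  · rintro ⟨hcpos, hd⟩
    rw [main c hcpos] at hd
    have h1 : α / 2 ≤ F (Real.sqrt c) - 1 / 2 := by
      have := min_le_left (F (Real.sqrt c) - 1 / 2) (1 - F (Real.sqrt c)); linarith
    have h2 : α / 2 ≤ 1 - F (Real.sqrt c) := by
      have := min_le_right (F (Real.sqrt c) - 1 / 2) (1 - F (Real.sqrt c)); linarith
    have hal : a ≤ Real.sqrt c := hFm.le_iff_le.mp (by rw [hFa]; linarith)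
    have hbl : Real.sqrt c ≤ b := hFm.le_iff_le.mp (by rw [hFb]; linarith)
    constructor
    · calc a ^ 2 ≤ Real.sqrt c ^ 2 := pow_le_pow_left₀ ha.le hal 2
        _ = c := Real.sq_sqrt hcpos.le
    · calc c = Real.sqrt c ^ 2 := (Real.sq_sqrt hcpos.le).symm
        _ ≤ b ^ 2 := pow_le_pow_left₀ (Real.sqrt_nonneg _) hbl 2
  · rintro ⟨h1, h2⟩
    have hcpos : 0 < c := lt_of_lt_of_le (pow_pos ha 2) h1
    have hal : a ≤ Real.sqrt c := by
      calc a = Real.sqrt (a ^ 2) := (Real.sqrt_sq ha.le).symm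
        _ ≤ Real.sqrt c := Real.sqrt_le_sqrt h1
    have hbl : Real.sqrt c ≤ b := by
      calc Real.sqrt c ≤ Real.sqrt (b ^ 2) := Real.sqrt_le_sqrt h2
        _ = b := Real.sqrt_sq hb.le
    have hfa : 1 / 2 + α / 2 ≤ F (Real.sqrt c) := hFa ▸ hFm.monotone hal
    have hfb : F (Real.sqrt c) ≤ 1 - α / 2 := hFb ▸ hFm.monotone hbl
    refine ⟨hcpos, ?_⟩
    rw [main c hcpos]
    have : α / 2 ≤ min (F (Real.sqrt c) - 1 / 2) (1 - F (Real.sqrt c)) :=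
      le_min (by linarith) (by linarith)
    linarith

end auxHD

/-- for a univariate probability measure symmetric about `0` with
invertible CDF `F`, the scatter halfspace depth is `2 min(F(√Σ) − 1/2, 1 − F(√Σ))`
and the depth region of order `α` is `[ (F⁻¹(1/2 + α/2))², (F⁻¹(1 − α/2))² ]`. -/
theorem HD_univariate_symmetric (P : Measure ℝ) [IsProbabilityMeasure P]
    (hsym : P.map (fun x => -x) = P)
    (F : ℝ → ℝ) (hF : F = fun x => ProbabilityTheory.cdf P x)
    (hFc : Continuous F) (hFm : StrictMono F)
    (Finv : ℝ → ℝ) (hFinv : ∀ y ∈ Set.Ioo (0 : ℝ) 1, F (Finv y) = y) :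
    (∀ c : ℝ, 0 < c →
        HD1 P c = 2 * min (F (Real.sqrt c) - 1 / 2) (1 - F (Real.sqrt c))) ∧
      (∀ α : ℝ, 0 < α → α < 1 →
        {c : ℝ | 0 < c ∧ α ≤ HD1 P c} =
          Set.Icc ((Finv (1 / 2 + α / 2)) ^ 2) ((Finv (1 - α / 2)) ^ 2)) := by
  exact HD_univ_aux P hsym F hF hFc hFm Finv hFinv
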